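/- Let n, m ≥ 2, let Z = M_{n,m}(ℂ) be the JC*-triple of complex n×m matrices with triple product {a,b,c} = (1/2)(a b* c + c b* a), and let (T, ρ) be a universal enveloping TRO of Z. Then T is TRO-isomorphic to M_{n,m}(ℂ) ⊕ M_{m,n}(ℂ): there exists a complex-linear bijection Φ : T → M_{n,m}(ℂ) × M_{m,n}(ℂ) with Φ(x y* z) = Φ(x) Φ(y)* Φ(z), where the ternary operation on the product is componentwise. -/

import Mathlib

noncomputable section

open Matrix

/-- A bundled complex Hilbert space. -/
structure HilbertC : Type 1 where
  carrier : Type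
  [nacg : NormedAddCommGroup carrier]
  [ips : InnerProductSpace ℂ carrier]
  [cs : CompleteSpace carrier]

attribute [instance] HilbertC.nacg HilbertC.ips HilbertC.cs

/-- The algebra `B(H)` of bounded operators on a complex Hilbert space `H`. -/
abbrev BH (H : HilbertC) := H.carrier →L[ℂ] H.carrier

/-- The Jordan triple product `{x,y,z} = (1/2)(x y* z + z y* x)`. -/
def jtp {A : Type*} [NonUnitalRing A] [StarRing A] [Module ℂ A] (x y z : A) : A :=
  (2⁻¹ : ℂ) • (x * star y * z + z * star y * x)

/-- `Z` is a JC*-triple: a closed complex subspace of `B(H)` closed under the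
Jordan triple product. -/
def IsJCTriple {H : HilbertC} (Z : Submodule ℂ (BH H)) : Prop :=
  IsClosed (Z : Set (BH H)) ∧ ∀ x ∈ Z, ∀ y ∈ Z, ∀ z ∈ Z, jtp x y z ∈ Z

/-- `T` is a TRO: a closed complex subspace of `B(H)` with `x y* z ∈ T`. -/
def IsTROsub {H : HilbertC} (T : Submodule ℂ (BH H)) : Prop :=
  IsClosed (T : Set (BH H)) ∧ ∀ x ∈ T, ∀ y ∈ T, ∀ z ∈ T, x * star y * z ∈ T

/-- The smallest closed complex subspace of `B(H)` containing `S` and closed under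
the ternary product `(x,y,z) ↦ x y* z`. -/
def troClosure {H : HilbertC} (S : Set (BH H)) : Submodule ℂ (BH H) :=
  sInf {W : Submodule ℂ (BH H) | IsClosed (W : Set (BH H)) ∧ S ⊆ W ∧
    ∀ x ∈ W, ∀ y ∈ W, ∀ z ∈ W, x * star y * z ∈ W}

/-- A triple homomorphism from a subspace `Z ⊆ B(H)` into `B(K)`. -/
def IsTripleHomB {H K : HilbertC} (Z : Submodule ℂ (BH H)) (φ : ↥Z →L[ℂ] BH K) : Prop :=
  ∀ x y z w : ↥Z, (w : BH H) = jtp (x : BH H) (y : BH H) (z : BH H) →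
    φ w = jtp (φ x) (φ y) (φ z)

/-- A triple homomorphism from a subspace `Z ⊆ B(H)` into a subspace `U ⊆ B(K)`. -/
def IsTripleHomInto {H K : HilbertC} (Z : Submodule ℂ (BH H)) (U : Submodule ℂ (BH K))
    (α : ↥Z →L[ℂ] ↥U) : Prop :=
  ∀ x y z w : ↥Z, (w : BH H) = jtp (x : BH H) (y : BH H) (z : BH H) →
    ((α w : BH K)) = jtp ((α x : BH K)) ((α y : BH K)) ((α z : BH K))

/-- A TRO-homomorphism between subspaces of operator algebras. -/
def IsTROHom {H K : HilbertC} (T : Submodule ℂ (BH H)) (U : Submodule ℂ (BH K))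
    (β : ↥T →L[ℂ] ↥U) : Prop :=
  ∀ x y z w : ↥T, (w : BH H) = (x : BH H) * star (y : BH H) * (z : BH H) →
    ((β w : BH K)) = (β x : BH K) * star ((β y : BH K)) * ((β z : BH K))

/-- `(T, ρ)` is a universal enveloping TRO of `Z`. -/
def IsUnivTRO {H Hh : HilbertC} (Z : Submodule ℂ (BH H)) (T : Submodule ℂ (BH Hh))
    (ρ : ↥Z →L[ℂ] ↥T) : Prop :=
  IsTROsub T ∧ IsTripleHomInto Z T ρ ∧
  troClosure (Set.range fun z : ↥Z => (ρ z : BH Hh)) = T ∧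
  ∀ (K : HilbertC) (U : Submodule ℂ (BH K)), IsTROsub U →
    ∀ α : ↥Z →L[ℂ] ↥U, IsTripleHomInto Z U α →
      ∃ β : ↥T →L[ℂ] ↥U, IsTROHom T U β ∧ ∀ z, β (ρ z) = α z

/-- The Jordan triple product on rectangular matrices. -/
def jtpM {n m : ℕ} (a b c : Matrix (Fin n) (Fin m) ℂ) : Matrix (Fin n) (Fin m) ℂ :=
  (2⁻¹ : ℂ) • (a * bᴴ * c + c * bᴴ * a)

/-- A triple homomorphism from the JC*-triple `M_{n,m}(ℂ)` into a subspace `U ⊆ B(K)`. -/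
def IsTripleHomMat {n m : ℕ} {K : HilbertC} (U : Submodule ℂ (BH K))
    (α : Matrix (Fin n) (Fin m) ℂ →L[ℂ] ↥U) : Prop :=
  ∀ a b c, ((α (jtpM a b c) : BH K)) = jtp ((α a : BH K)) ((α b : BH K)) ((α c : BH K))

/-- `(T, ρ)` is a universal enveloping TRO of the JC*-triple `M_{n,m}(ℂ)`. -/
def IsUnivTROMat {n m : ℕ} {Hh : HilbertC} (T : Submodule ℂ (BH Hh))
    (ρ : Matrix (Fin n) (Fin m) ℂ →L[ℂ] ↥T) : Prop :=
  IsTROsub T ∧ IsTripleHomMat T ρ ∧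
  troClosure (Set.range fun a => (ρ a : BH Hh)) = T ∧
  ∀ (K : HilbertC) (U : Submodule ℂ (BH K)), IsTROsub U →
    ∀ α : Matrix (Fin n) (Fin m) ℂ →L[ℂ] ↥U, IsTripleHomMat U α →
      ∃ β : ↥T →L[ℂ] ↥U, IsTROHom T U β ∧ ∀ a, β (ρ a) = α a


/-- An abstract rectangular grid in a star-ring, satisfying the universal
`M_{n,m}` triple relations on matrix units. -/
structure Grid (B : Type*) [Ring B] [StarRing B] (I J : Type*)
    [DecidableEq I] [DecidableEq J] where
  e : I → J → B
  rel : ∀ i j k l r s, e i j * star (e k l) * e r s + e r s * star (e k l) * e i j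
      = (if j = l ∧ k = r then e i s else 0) + (if s = l ∧ k = i then e r j else 0)
  half : ∀ x y : B, x + x = y + y → x = y
  sig : J → J
  hsig : ∀ j, sig j ≠ j
  tau : I → I
  htau : ∀ i, tau i ≠ i

namespace Grid

variable {B : Type*} [Ring B] [StarRing B] {I J : Type*}
  [DecidableEq I] [DecidableEq J] (G : Grid B I J)

theorem two_sided (i : I) (j : J) (k : I) (l : J) :
    G.e i j * star (G.e k l) * G.e i j = if j = l ∧ k = i then G.e i j else 0 :=
  G.half _ _ (G.rel i j k l i j)

theorem tripotent (i : I) (j : J) : G.e i j * star (G.e i j) * G.e i j = G.e i j := by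
  simpa using G.two_sided i j i j

theorem star_tri (i : I) (j : J) :
    star (G.e i j) * G.e i j * star (G.e i j) = star (G.e i j) := by
  have h := congrArg star (G.tripotent i j)
  simp only [StarMul.star_mul, star_star] at h
  calc star (G.e i j) * G.e i j * star (G.e i j)
      = star (G.e i j) * (G.e i j * star (G.e i j)) := by rw [mul_assoc]
    _ = star (G.e i j) := h

theorem two_sided_star (a : I) (b : J) (c : I) (d : J) (h : ¬(b = d ∧ c = a)) :
    star (G.e a b) * G.e c d * star (G.e a b) = 0 := by
  have h2 := G.two_sided a b c d
  rw [if_neg h] at h2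
  have h3 := congrArg star h2
  simp only [StarMul.star_mul, star_star, star_zero] at h3
  calc star (G.e a b) * G.e c d * star (G.e a b)
      = star (G.e a b) * (G.e c d * star (G.e a b)) := by rw [mul_assoc]
    _ = 0 := h3

theorem anticomm (i : I) (j : J) (k : I) (l : J) (r : I) (s : J)
    (h1 : ¬(j = l ∧ k = r)) (h2 : ¬(s = l ∧ k = i)) :
    G.e i j * star (G.e k l) * G.e r s = -(G.e r s * star (G.e k l) * G.e i j) := by
  have h := G.rel i j k l r s
  rw [if_neg h1, if_neg h2, add_zero] at h
  exact eq_neg_of_add_eq_zero_left h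

theorem quadA (i r : I) (x y : J) (h : y ≠ x) :
    G.e i x * star (G.e r x) * G.e r y + G.e r y * star (G.e r x) * G.e i x = G.e i y := by
  simpa [h] using G.rel i x r x r y

theorem col_split (i k : I) (j : J) (h : i ≠ k) :
    G.e i j * star (G.e k j) * G.e k j + G.e k j * star (G.e k j) * G.e i j = G.e i j := by
  simpa [Ne.symm h] using G.rel i j k j k j

theorem zero1 (i r : I) (l s : J) (h1 : r ≠ i) (h2 : s ≠ l) :
    G.e i l * star (G.e i l) * G.e r s = 0 := by
  have hq := G.quadA r i l s h2
  have hA := G.col_split r i l h1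
  have hB := G.quadA i i l s h2
  have hst := G.star_tri i l
  calc G.e i l * star (G.e i l) * G.e r s
      = G.e i l * star (G.e i l) * (G.e r l * star (G.e i l) * G.e i s
          + G.e i s * star (G.e i l) * G.e r l) := by rw [hq]
    _ = (G.e i l * star (G.e i l) * G.e r l) * star (G.e i l) * G.e i s
        + (G.e i l * star (G.e i l) * G.e i s) * star (G.e i l) * G.e r l := by noncomm_ring
    _ = (G.e r l - G.e r l * star (G.e i l) * G.e i l) * star (G.e i l) * G.e i s
        + (G.e i s - G.e i s * star (G.e i l) * G.e i l) * star (G.e i l) * G.e r l := by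
          rw [eq_sub_of_add_eq' hA, eq_sub_of_add_eq hB]
    _ = G.e r l * star (G.e i l) * G.e i s + G.e i s * star (G.e i l) * G.e r l
        - (G.e r l * (star (G.e i l) * G.e i l * star (G.e i l)) * G.e i s
          + G.e i s * (star (G.e i l) * G.e i l * star (G.e i l)) * G.e r l) := by noncomm_ring
    _ = 0 := by rw [hst]; noncomm_ring

theorem zero2 (i k r : I) (l s : J) (h1 : k ≠ r) (h2 : s ≠ l) :
    G.e i l * star (G.e k l) * G.e r s = 0 := by
  by_cases hk : k = i
  · rw [hk]
    exact G.zero1 i r l s (fun hh => h1 (by rw [hk, hh])) h2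
  · have hsp := G.col_split i k l (Ne.symm hk)
    have hz := G.zero1 k r l s (Ne.symm h1) h2
    have hts := G.two_sided_star k l i l (by simp [Ne.symm hk])
    calc G.e i l * star (G.e k l) * G.e r s
        = (G.e i l * star (G.e k l) * G.e k l + G.e k l * star (G.e k l) * G.e i l)
            * star (G.e k l) * G.e r s := by rw [hsp]
      _ = G.e i l * star (G.e k l) * (G.e k l * star (G.e k l) * G.e r s)
          + G.e k l * (star (G.e k l) * G.e i l * star (G.e k l)) * G.e r s := by noncomm_ring
      _ = 0 := by rw [hz, hts]; noncomm_ring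

theorem zero2col (i r : I) (j l s : J) (h1 : r ≠ i) (h2 : s ≠ l) :
    G.e i j * star (G.e i l) * G.e r s = 0 := by
  by_cases hj : j = l
  · subst hj; exact G.zero1 i r j s h1 h2
  · have hsp := G.quadA i i l j hj
    have hz := G.zero1 i r l s h1 h2
    have hts := G.two_sided_star i l i j (by simp [Ne.symm hj])
    calc G.e i j * star (G.e i l) * G.e r s
        = (G.e i l * star (G.e i l) * G.e i j + G.e i j * star (G.e i l) * G.e i l)
            * star (G.e i l) * G.e r s := by rw [hsp]
      _ = G.e i l * (star (G.e i l) * G.e i j * star (G.e i l)) * G.e r s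
          + G.e i j * star (G.e i l) * (G.e i l * star (G.e i l) * G.e r s) := by noncomm_ring
      _ = 0 := by rw [hz, hts]; noncomm_ring

theorem zero3 (i k r : I) (j l : J) (h1 : j ≠ l) (h2 : k ≠ i) :
    G.e i j * star (G.e k l) * G.e r l = 0 := by
  have hac := G.anticomm i j k l r l (by simp [h1]) (by simp [h2])
  rw [hac, G.zero2 r k i l j h2 h1, neg_zero]

theorem zero3col (i r : I) (j l s : J) (h1 : j ≠ l) (h2 : r ≠ i) :
    G.e i j * star (G.e r l) * G.e r s = 0 := by
  have hac := G.anticomm i j r l r s (by simp [h1]) (by simp [h2])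
  rw [hac, G.zero2col r i s l j (Ne.symm h2) h1, neg_zero]

theorem singlecol (i k r : I) (l : J) (h1 : i ≠ k) (h2 : k ≠ r) :
    G.e i l * star (G.e k l) * G.e r l = 0 := by
  set x := G.sig l with hx
  have hxl : l ≠ x := Ne.symm (G.hsig l)
  have hq := G.quadA r k x l hxl
  have hz1 := G.zero2 i k r l x h2 (G.hsig l)
  have hsp := G.col_split i k l h1
  have hz2 := G.zero3 i k r l x hxl (Ne.symm h1)
  calc G.e i l * star (G.e k l) * G.e r l
      = G.e i l * star (G.e k l) * (G.e r x * star (G.e k x) * G.e k l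
          + G.e k l * star (G.e k x) * G.e r x) := by rw [hq]
    _ = (G.e i l * star (G.e k l) * G.e r x) * star (G.e k x) * G.e k l
        + (G.e i l * star (G.e k l) * G.e k l) * star (G.e k x) * G.e r x := by noncomm_ring
    _ = (G.e i l * star (G.e k l) * G.e r x) * star (G.e k x) * G.e k l
        + (G.e i l - G.e k l * star (G.e k l) * G.e i l) * star (G.e k x) * G.e r x := by
          rw [eq_sub_of_add_eq hsp]
    _ = (G.e i l * star (G.e k l) * G.e r x) * star (G.e k x) * G.e k l
        + G.e i l * star (G.e k x) * G.e r x
        - G.e k l * star (G.e k l) * (G.e i l * star (G.e k x) * G.e r x) := by noncomm_ring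
    _ = 0 := by rw [hz1, hz2]; noncomm_ring

theorem singlerow (i : I) (j l s : J) (h1 : j ≠ l) (h2 : s ≠ l) :
    G.e i j * star (G.e i l) * G.e i s = 0 := by
  set y := G.tau i with hy
  have hyi : y ≠ i := G.htau i
  have hq := G.quadA i y l s h2
  have hz1 := G.zero2col i y j l s hyi h2
  have hsp := G.quadA i i l j h1
  have hz2 := G.zero3col i y j l s h1 hyi
  calc G.e i j * star (G.e i l) * G.e i s
      = G.e i j * star (G.e i l) * (G.e i l * star (G.e y l) * G.e y s
          + G.e y s * star (G.e y l) * G.e i l) := by rw [hq]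
    _ = (G.e i j * star (G.e i l) * G.e i l) * star (G.e y l) * G.e y s
        + (G.e i j * star (G.e i l) * G.e y s) * star (G.e y l) * G.e i l := by noncomm_ring
    _ = (G.e i j - G.e i l * star (G.e i l) * G.e i j) * star (G.e y l) * G.e y s
        + (G.e i j * star (G.e i l) * G.e y s) * star (G.e y l) * G.e i l := by
          rw [eq_sub_of_add_eq' hsp]
    _ = G.e i j * star (G.e y l) * G.e y s
        - G.e i l * star (G.e i l) * (G.e i j * star (G.e y l) * G.e y s)
        + (G.e i j * star (G.e i l) * G.e y s) * star (G.e y l) * G.e i l := by noncomm_ring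
    _ = 0 := by rw [hz1, hz2]; noncomm_ring

theorem zero4 (i k r : I) (j l s : J) (h1 : j ≠ l) (h2 : s ≠ l) (h3 : k ≠ i) (h4 : k ≠ r) :
    G.e i j * star (G.e k l) * G.e r s = 0 := by
  have hsp := G.col_split k r l h4
  have hz1 := G.zero2 r k r l s h4 h2
  have hz2 := G.zero3 i k r j l h1 h3
  calc G.e i j * star (G.e k l) * G.e r s
      = G.e i j * star (G.e k l * star (G.e r l) * G.e r l
          + G.e r l * star (G.e r l) * G.e k l) * G.e r s := by rw [hsp]
    _ = G.e i j * star (G.e r l) * (G.e r l * star (G.e k l) * G.e r s)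
        + (G.e i j * star (G.e k l) * G.e r l) * star (G.e r l) * G.e r s := by
          simp only [star_add, StarMul.star_mul, star_star]; noncomm_ring
    _ = 0 := by rw [hz1, hz2]; noncomm_ring

theorem vanish (i k r : I) (j l s : J)
    (h1 : ¬(j = l ∧ k = r)) (h2 : ¬(s = l ∧ k = i)) :
    G.e i j * star (G.e k l) * G.e r s = 0 := by
  by_cases hjl : j = l <;> by_cases hsl : s = l
  · -- j = l, s = l
    have hkr : k ≠ r := fun h => h1 ⟨hjl, h⟩
    have hki : k ≠ i := fun h => h2 ⟨hsl, h⟩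
    rw [hjl, hsl]
    exact G.singlecol i k r l (Ne.symm hki) hkr
  · -- j = l, s ≠ l
    have hkr : k ≠ r := fun h => h1 ⟨hjl, h⟩
    rw [hjl]
    exact G.zero2 i k r l s hkr hsl
  · -- j ≠ l, s = l
    have hki : k ≠ i := fun h => h2 ⟨hsl, h⟩
    rw [hsl]
    exact G.zero3 i k r j l hjl hki
  · -- j ≠ l, s ≠ l
    by_cases hki : k = i
    · by_cases hri : r = i
      · rw [hki, hri]; exact G.singlerow i j l s hjl hsl
      · rw [hki]; exact G.zero2col i r j l s hri hsl
    · by_cases hkr : k = r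
      · rw [hkr]
        exact G.zero3col i r j l s hjl (fun hh => hki (hkr.trans hh))
      · exact G.zero4 i k r j l s hjl hsl hki hkr

end Grid

theorem proj_comm {B : Type*} [Ring B] [StarRing B] {a b : B}
    (hsp : a * star b * b + b * star b * a = a) :
    b * star b * (a * star a) = a * star a * (b * star b) := by
  have h1 : a * star b * b = a - b * star b * a := eq_sub_of_add_eq hsp
  have h2 : a * star b * b * star a = a * star a - b * star b * (a * star a) := by
    rw [h1]; noncomm_ring
  have h3 : a * star b * b * star a = a * star a - a * star a * (b * star b) := by
    calc a * star b * b * star a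
        = star (a * star b * b * star a) := by
          simp only [StarMul.star_mul, star_star]; try noncomm_ring
      _ = star (a * star a - b * star b * (a * star a)) := by rw [h2]
      _ = a * star a - a * star a * (b * star b) := by
          simp only [star_sub, StarMul.star_mul, star_star]; try noncomm_ring
  exact sub_right_inj.mp (h2.symm.trans h3)

namespace Grid

variable {B : Type*} [Ring B] [StarRing B] {I J : Type*}
  [DecidableEq I] [DecidableEq J] (G : Grid B I J)

theorem gcomm (i : I) (j l : J) (h : j ≠ l) :
    G.e i l * star (G.e i l) * (G.e i j * star (G.e i j))
      = G.e i j * star (G.e i j) * (G.e i l * star (G.e i l)) := by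
  have hsp := G.quadA i i l j h
  exact proj_comm (a := G.e i j) (b := G.e i l) (by rw [add_comm]; exact hsp)

theorem colgcomm (i k : I) (s : J) (h : i ≠ k) :
    G.e k s * star (G.e k s) * (G.e i s * star (G.e i s))
      = G.e i s * star (G.e i s) * (G.e k s * star (G.e k s)) :=
  proj_comm (G.col_split i k s h)

theorem P1aux (i : I) (l l' s : J) (hne : l ≠ l') (hs : l' ≠ s) :
    G.e i l * star (G.e i l) * (G.e i l' * star (G.e i l') * G.e i s)
      = G.e i l' * star (G.e i l') * G.e i s := by
  have hsp := G.quadA i i l l' (Ne.symm hne)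
  have hz := G.singlerow i l l' s hne (Ne.symm hs)
  calc G.e i l * star (G.e i l) * (G.e i l' * star (G.e i l') * G.e i s)
      = (G.e i l * star (G.e i l) * G.e i l') * star (G.e i l') * G.e i s := by noncomm_ring
    _ = (G.e i l' - G.e i l' * star (G.e i l) * G.e i l) * star (G.e i l') * G.e i s := by
        rw [eq_sub_of_add_eq hsp]
    _ = G.e i l' * star (G.e i l') * G.e i s
        - G.e i l' * star (G.e i l) * (G.e i l * star (G.e i l') * G.e i s) := by noncomm_ring
    _ = G.e i l' * star (G.e i l') * G.e i s := by rw [hz]; noncomm_ring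

theorem P1 (i : I) (l l' s : J) (h1 : l ≠ s) (h2 : l' ≠ s) :
    G.e i l * star (G.e i l) * G.e i s = G.e i l' * star (G.e i l') * G.e i s := by
  by_cases hll : l = l'
  · rw [hll]
  · have c1 := G.P1aux i l l' s hll h2
    have c2 := G.P1aux i l' l s (Ne.symm hll) h1
    calc G.e i l * star (G.e i l) * G.e i s
        = G.e i l' * star (G.e i l') * (G.e i l * star (G.e i l) * G.e i s) := c2.symm
      _ = G.e i l' * star (G.e i l') * (G.e i l * star (G.e i l)) * G.e i s := by noncomm_ring
      _ = G.e i l * star (G.e i l) * (G.e i l' * star (G.e i l')) * G.e i s := by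
          rw [G.gcomm i l l' hll]
      _ = G.e i l * star (G.e i l) * (G.e i l' * star (G.e i l') * G.e i s) := by noncomm_ring
      _ = G.e i l' * star (G.e i l') * G.e i s := c1

theorem colP1aux (i i' k : I) (s : J) (hne : i ≠ i') (hk : i' ≠ k) :
    G.e i s * star (G.e i s) * (G.e i' s * star (G.e i' s) * G.e k s)
      = G.e i' s * star (G.e i' s) * G.e k s := by
  have hsp := G.col_split i' i s (Ne.symm hne)
  have hz := G.singlecol i i' k s hne hk
  calc G.e i s * star (G.e i s) * (G.e i' s * star (G.e i' s) * G.e k s)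
      = (G.e i s * star (G.e i s) * G.e i' s) * star (G.e i' s) * G.e k s := by noncomm_ring
    _ = (G.e i' s - G.e i' s * star (G.e i s) * G.e i s) * star (G.e i' s) * G.e k s := by
        rw [eq_sub_of_add_eq' hsp]
    _ = G.e i' s * star (G.e i' s) * G.e k s
        - G.e i' s * star (G.e i s) * (G.e i s * star (G.e i' s) * G.e k s) := by noncomm_ring
    _ = G.e i' s * star (G.e i' s) * G.e k s := by rw [hz]; noncomm_ring

theorem colP1 (y y' k : I) (s : J) (h1 : y ≠ k) (h2 : y' ≠ k) :
    G.e y s * star (G.e y s) * G.e k s = G.e y' s * star (G.e y' s) * G.e k s := by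
  by_cases hyy : y = y'
  · rw [hyy]
  · have c1 := G.colP1aux y y' k s hyy h2
    have c2 := G.colP1aux y' y k s (Ne.symm hyy) h1
    calc G.e y s * star (G.e y s) * G.e k s
        = G.e y' s * star (G.e y' s) * (G.e y s * star (G.e y s) * G.e k s) := c2.symm
      _ = G.e y' s * star (G.e y' s) * (G.e y s * star (G.e y s)) * G.e k s := by noncomm_ring
      _ = G.e y s * star (G.e y s) * (G.e y' s * star (G.e y' s)) * G.e k s := by
          rw [G.colgcomm y y' s hyy]
      _ = G.e y s * star (G.e y s) * (G.e y' s * star (G.e y' s) * G.e k s) := by noncomm_ring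
      _ = G.e y' s * star (G.e y' s) * G.e k s := c1

/-- The "first-component" part of a grid element. -/
def P (i : I) (s : J) : B := G.e i (G.sig s) * star (G.e i (G.sig s)) * G.e i s

/-- The "second-component" part of a grid element. -/
def Q (i : I) (s : J) : B := G.e i s * star (G.e i (G.sig s)) * G.e i (G.sig s)

theorem PQ (i : I) (s : J) : G.P i s + G.Q i s = G.e i s :=
  G.quadA i i (G.sig s) s (Ne.symm (G.hsig s))

theorem Pdef_alt (i : I) (l s : J) (h : l ≠ s) :
    G.e i l * star (G.e i l) * G.e i s = G.P i s :=
  G.P1 i l (G.sig s) s h (G.hsig s)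

theorem bridge (i : I) (s : J) :
    G.e (G.tau i) s * star (G.e (G.tau i) s) * G.e i s = G.Q i s := by
  have hu := G.quadA i (G.tau i) (G.sig s) s (Ne.symm (G.hsig s))
  have hz1 : G.e (G.tau i) s * star (G.e (G.tau i) s) * G.e i (G.sig s) = 0 :=
    G.zero1 (G.tau i) i s (G.sig s) (Ne.symm (G.htau i)) (G.hsig s)
  have hz2 : G.e (G.tau i) s * star (G.e i (G.sig s)) * G.e i (G.sig s) = 0 :=
    G.zero3 (G.tau i) i i s (G.sig s) (Ne.symm (G.hsig s)) (Ne.symm (G.htau i))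
  have hX : G.e (G.tau i) s * star (G.e (G.tau i) s) * G.e i s
      = G.e (G.tau i) s * star (G.e (G.tau i) (G.sig s)) * G.e i (G.sig s) := by
    calc G.e (G.tau i) s * star (G.e (G.tau i) s) * G.e i s
        = G.e (G.tau i) s * star (G.e (G.tau i) s)
            * (G.e i (G.sig s) * star (G.e (G.tau i) (G.sig s)) * G.e (G.tau i) s
              + G.e (G.tau i) s * star (G.e (G.tau i) (G.sig s)) * G.e i (G.sig s)) := by
          rw [hu]
      _ = (G.e (G.tau i) s * star (G.e (G.tau i) s) * G.e i (G.sig s))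
            * star (G.e (G.tau i) (G.sig s)) * G.e (G.tau i) s
          + (G.e (G.tau i) s * star (G.e (G.tau i) s) * G.e (G.tau i) s)
            * star (G.e (G.tau i) (G.sig s)) * G.e i (G.sig s) := by noncomm_ring
      _ = G.e (G.tau i) s * star (G.e (G.tau i) (G.sig s)) * G.e i (G.sig s) := by
          rw [hz1, G.tripotent (G.tau i) s]; noncomm_ring
  have hY : G.Q i s = G.e (G.tau i) s * star (G.e (G.tau i) (G.sig s)) * G.e i (G.sig s) := by
    calc G.Q i s = G.e i s * star (G.e i (G.sig s)) * G.e i (G.sig s) := rfl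
      _ = (G.e i (G.sig s) * star (G.e (G.tau i) (G.sig s)) * G.e (G.tau i) s
            + G.e (G.tau i) s * star (G.e (G.tau i) (G.sig s)) * G.e i (G.sig s))
          * star (G.e i (G.sig s)) * G.e i (G.sig s) := by rw [hu]
      _ = G.e i (G.sig s) * star (G.e (G.tau i) (G.sig s))
            * (G.e (G.tau i) s * star (G.e i (G.sig s)) * G.e i (G.sig s))
          + G.e (G.tau i) s * star (G.e (G.tau i) (G.sig s))
            * (G.e i (G.sig s) * star (G.e i (G.sig s)) * G.e i (G.sig s)) := by noncomm_ring
      _ = G.e (G.tau i) s * star (G.e (G.tau i) (G.sig s)) * G.e i (G.sig s) := by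
          rw [hz2, G.tripotent i (G.sig s)]; noncomm_ring
  rw [hX, ← hY]

theorem Qc (i k : I) (s : J) (h : k ≠ i) :
    G.e k s * star (G.e k s) * G.e i s = G.Q i s :=
  (G.colP1 k (G.tau i) i s h (G.htau i)).trans (G.bridge i s)

theorem QabsorbR (r : I) (b y : J) :
    G.Q r b * star (G.e r y) * G.e r y = G.Q r b := by
  by_cases h1 : y = G.sig b
  · rw [h1]
    have ht := G.tripotent r (G.sig b)
    calc G.Q r b * star (G.e r (G.sig b)) * G.e r (G.sig b)
        = G.e r b * star (G.e r (G.sig b))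
            * (G.e r (G.sig b) * star (G.e r (G.sig b)) * G.e r (G.sig b)) := by
          simp only [Q]; noncomm_ring
      _ = G.Q r b := by rw [ht]; rfl
  · have hq := G.quadA r r y (G.sig b) (Ne.symm h1)
    have hp : G.e r y * star (G.e r y) * G.e r (G.sig b) = G.P r (G.sig b) :=
      G.Pdef_alt r y (G.sig b) h1
    have hz : G.e r b * star (G.e r (G.sig b)) * G.e r (G.sig (G.sig b)) = 0 :=
      G.singlerow r b (G.sig b) (G.sig (G.sig b)) (Ne.symm (G.hsig b)) (G.hsig (G.sig b))
    calc G.Q r b * star (G.e r y) * G.e r y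
        = G.e r b * star (G.e r (G.sig b))
            * (G.e r (G.sig b) * star (G.e r y) * G.e r y) := by
          simp only [Q]; noncomm_ring
      _ = G.e r b * star (G.e r (G.sig b))
            * (G.e r (G.sig b) - G.e r y * star (G.e r y) * G.e r (G.sig b)) := by
          rw [eq_sub_of_add_eq' hq]
      _ = G.Q r b
          - G.e r b * star (G.e r (G.sig b)) * (G.e r y * star (G.e r y) * G.e r (G.sig b)) := by
          simp only [Q]; noncomm_ring
      _ = G.Q r b - G.e r b * star (G.e r (G.sig b)) * G.P r (G.sig b) := by rw [hp]
      _ = G.Q r b - (G.e r b * star (G.e r (G.sig b)) * G.e r (G.sig (G.sig b)))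
            * star (G.e r (G.sig (G.sig b))) * G.e r (G.sig b) := by
          simp only [P]; noncomm_ring
      _ = G.Q r b := by rw [hz]; noncomm_ring

theorem hook (a b : I) (x y : J) (hab : a ≠ b) (hxy : x ≠ y) :
    G.e a x * star (G.e a y) * G.e b y = G.Q b x := by
  have hq := G.quadA a b x y (Ne.symm hxy)
  have hz1 : G.e a x * star (G.e b y) * G.e b x = 0 :=
    G.vanish a b b x y x (by simp [hxy]) (by simp [hxy])
  have h2 : G.e a x * star (G.e a x) * G.e b x = G.Q b x := G.Qc b a x hab
  calc G.e a x * star (G.e a y) * G.e b y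
      = G.e a x * star (G.e a x * star (G.e b x) * G.e b y
          + G.e b y * star (G.e b x) * G.e a x) * G.e b y := by rw [hq]
    _ = (G.e a x * star (G.e b y) * G.e b x) * star (G.e a x) * G.e b y
        + (G.e a x * star (G.e a x) * G.e b x) * star (G.e b y) * G.e b y := by
          simp only [star_add, StarMul.star_mul, star_star]; noncomm_ring
    _ = G.Q b x * star (G.e b y) * G.e b y := by rw [hz1, h2]; noncomm_ring
    _ = G.Q b x := G.QabsorbR b x y

theorem Pabsorb (i : I) (x s : J) :
    G.e i x * star (G.e i x) * G.P i s = G.P i s := by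
  by_cases h1 : x = G.sig s
  · rw [h1]
    have ht := G.tripotent i (G.sig s)
    calc G.e i (G.sig s) * star (G.e i (G.sig s)) * G.P i s
        = (G.e i (G.sig s) * star (G.e i (G.sig s)) * G.e i (G.sig s))
            * star (G.e i (G.sig s)) * G.e i s := by simp only [P]; noncomm_ring
      _ = G.P i s := by rw [ht]; rfl
  · by_cases h2 : x = s
    · rw [h2]
      have ht := G.tripotent i s
      calc G.e i s * star (G.e i s) * G.P i s
          = G.e i s * star (G.e i s) * (G.e i (G.sig s) * star (G.e i (G.sig s))) * G.e i s := by
            simp only [P]; noncomm_ring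
        _ = G.e i (G.sig s) * star (G.e i (G.sig s)) * (G.e i s * star (G.e i s)) * G.e i s := by
            rw [G.gcomm i (G.sig s) s (G.hsig s)]
        _ = G.e i (G.sig s) * star (G.e i (G.sig s)) * (G.e i s * star (G.e i s) * G.e i s) := by
            noncomm_ring
        _ = G.P i s := by rw [ht]; rfl
    · have hq := G.quadA i i x (G.sig s) (fun hh => h1 hh.symm)
      have h0 := G.singlerow i x (G.sig s) s h1 (Ne.symm (G.hsig s))
      calc G.e i x * star (G.e i x) * G.P i s
          = (G.e i x * star (G.e i x) * G.e i (G.sig s)) * star (G.e i (G.sig s)) * G.e i s := by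
            simp only [P]; noncomm_ring
        _ = (G.e i (G.sig s) - G.e i (G.sig s) * star (G.e i x) * G.e i x)
              * star (G.e i (G.sig s)) * G.e i s := by rw [eq_sub_of_add_eq hq]
        _ = G.P i s - G.e i (G.sig s) * star (G.e i x)
              * (G.e i x * star (G.e i (G.sig s)) * G.e i s) := by simp only [P]; noncomm_ring
        _ = G.P i s := by rw [h0]; noncomm_ring

theorem GQ (i r : I) (j l : J) (h : ¬(j = l ∧ i = r)) :
    G.e i j * star (G.e i l) * G.e r l = G.Q r j := by
  by_cases hir : i = r
  · have hjl : j ≠ l := fun hh => h ⟨hh, hir⟩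
    rw [← hir]
    have hsp := G.quadA i i l j hjl
    have hp : G.e i l * star (G.e i l) * G.e i j = G.P i j := G.Pdef_alt i l j (Ne.symm hjl)
    have h2 := eq_sub_of_add_eq' hsp
    rw [hp] at h2
    rw [h2, ← G.PQ i j]; abel
  · by_cases hjl : j = l
    · rw [hjl]
      exact G.Qc r i l hir
    · exact G.hook i r j l hir hjl

theorem GP (i k : I) (l s : J) (h : ¬(k = i ∧ l = s)) :
    G.e i l * star (G.e k l) * G.e k s = G.P i s := by
  by_cases hki : k = i
  · have hls : l ≠ s := fun hh => h ⟨hki, hh⟩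
    rw [hki]
    exact G.Pdef_alt i l s hls
  · have hrel := G.rel i l k l k s
    rw [if_pos ⟨rfl, rfl⟩, if_neg (by simp [hki])] at hrel
    have hQ : G.e k s * star (G.e k l) * G.e i l = G.Q i s := by
      by_cases hls : l = s
      · rw [← hls]
        exact G.Qc i k l hki
      · exact G.hook k i s l hki (Ne.symm hls)
    rw [hQ, add_zero] at hrel
    have h2 := eq_sub_of_add_eq hrel
    rw [h2, ← G.PQ i s]; abel

theorem master (i k r : I) (j l s : J) :
    G.e i j * star (G.e k l) * G.e r s
      = (if j = l ∧ k = r then G.P i s else 0) + (if s = l ∧ k = i then G.Q r j else 0) := by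
  by_cases c1 : j = l ∧ k = r <;> by_cases c2 : s = l ∧ k = i
  · obtain ⟨hjl, hkr⟩ := c1; obtain ⟨hsl, hki⟩ := c2
    rw [if_pos ⟨hjl, hkr⟩, if_pos ⟨hsl, hki⟩]
    rw [hjl, hsl, ← hkr, hki]
    rw [G.tripotent i l, G.PQ i l]
  · obtain ⟨hjl, hkr⟩ := c1
    rw [if_pos ⟨hjl, hkr⟩, if_neg c2, add_zero, hjl, ← hkr]
    exact G.GP i k l s (fun hh => c2 ⟨hh.2.symm, hh.1⟩)
  · obtain ⟨hsl, hki⟩ := c2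
    rw [if_neg c1, if_pos ⟨hsl, hki⟩, zero_add, hsl, hki]
    exact G.GQ i r j l (fun hh => c1 ⟨hh.1, hki.trans hh.2⟩)
  · rw [if_neg c1, if_neg c2]
    simpa using G.vanish i k r j l s c1 c2

theorem N1 (a : I) (b : J) (k r : I) (l s : J) :
    G.e a b * star (G.e k l) * G.P r s = if b = l ∧ k = r then G.P a s else 0 := by
  have hm := G.master a k r b l (G.sig s)
  have hA : G.P a (G.sig s) * star (G.e r (G.sig s)) * G.e r s = G.P a s := by
    have hgp : G.e a (G.sig s) * star (G.e r (G.sig s)) * G.e r s = G.P a s :=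
      G.GP a r (G.sig s) s (fun hh => G.hsig s hh.2)
    calc G.P a (G.sig s) * star (G.e r (G.sig s)) * G.e r s
        = G.e a (G.sig (G.sig s)) * star (G.e a (G.sig (G.sig s)))
            * (G.e a (G.sig s) * star (G.e r (G.sig s)) * G.e r s) := by
          simp only [P]; noncomm_ring
      _ = G.e a (G.sig (G.sig s)) * star (G.e a (G.sig (G.sig s))) * G.P a s := by rw [hgp]
      _ = G.P a s := G.Pabsorb a (G.sig (G.sig s)) s
  have hB : G.Q r b * star (G.e r (G.sig s)) * G.e r s = 0 := by
    by_cases hb : G.sig b = G.sig s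
    · have hbs : b ≠ G.sig s := fun hh =>
        G.hsig (G.sig s) (((congrArg G.sig hh).symm).trans hb)
      have hz2 : G.e r b * star (G.e r (G.sig s)) * G.e r s = 0 :=
        G.singlerow r b (G.sig s) s hbs (Ne.symm (G.hsig s))
      have hQrw : G.Q r b = G.e r b * star (G.e r (G.sig s)) * G.e r (G.sig s) := by
        simp only [Q]; rw [hb]
      calc G.Q r b * star (G.e r (G.sig s)) * G.e r s
          = G.e r b * (star (G.e r (G.sig s)) * G.e r (G.sig s) * star (G.e r (G.sig s)))
              * G.e r s := by rw [hQrw]; noncomm_ring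
        _ = G.e r b * star (G.e r (G.sig s)) * G.e r s := by rw [G.star_tri]; try noncomm_ring
        _ = 0 := hz2
    · have hz : G.e r (G.sig b) * star (G.e r (G.sig s)) * G.e r s = 0 :=
        G.vanish r r r (G.sig b) (G.sig s) s (by simp [hb]) (by simp [Ne.symm (G.hsig s)])
      calc G.Q r b * star (G.e r (G.sig s)) * G.e r s
          = G.e r b * star (G.e r (G.sig b))
              * (G.e r (G.sig b) * star (G.e r (G.sig s)) * G.e r s) := by
            simp only [Q]; noncomm_ring
        _ = 0 := by rw [hz, mul_zero]
  calc G.e a b * star (G.e k l) * G.P r s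
      = (G.e a b * star (G.e k l) * G.e r (G.sig s)) * star (G.e r (G.sig s)) * G.e r s := by
        simp only [P]; noncomm_ring
    _ = ((if b = l ∧ k = r then G.P a (G.sig s) else 0)
          + (if G.sig s = l ∧ k = a then G.Q r b else 0))
        * star (G.e r (G.sig s)) * G.e r s := by rw [hm]
    _ = (if b = l ∧ k = r then G.P a (G.sig s) * star (G.e r (G.sig s)) * G.e r s else 0)
        + (if G.sig s = l ∧ k = a then G.Q r b * star (G.e r (G.sig s)) * G.e r s else 0) := by
        split_ifs <;> noncomm_ring
    _ = if b = l ∧ k = r then G.P a s else 0 := by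
        rw [hA, hB]; split_ifs <;> simp

theorem N2 (a : I) (b : J) (k r : I) (l s : J) :
    G.e a b * star (G.e k l) * G.Q r s = if s = l ∧ k = a then G.Q r b else 0 := by
  have hm := G.master a k r b l s
  have hC : G.P a s * star (G.e r (G.sig s)) * G.e r (G.sig s) = 0 := by
    by_cases hra : r = a
    · have hin : G.e a s * star (G.e r (G.sig s)) * G.e r (G.sig s) = G.Q a s := by
        rw [hra]
        exact G.GQ a a s (G.sig s) (by simp [Ne.symm (G.hsig s)])
      have hts : star (G.e a (G.sig s)) * G.e a s * star (G.e a (G.sig s)) = 0 :=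
        G.two_sided_star a (G.sig s) a s (by simp [G.hsig s])
      calc G.P a s * star (G.e r (G.sig s)) * G.e r (G.sig s)
          = G.e a (G.sig s) * star (G.e a (G.sig s))
              * (G.e a s * star (G.e r (G.sig s)) * G.e r (G.sig s)) := by
            simp only [P]; noncomm_ring
        _ = G.e a (G.sig s) * star (G.e a (G.sig s)) * G.Q a s := by rw [hin]
        _ = G.e a (G.sig s) * (star (G.e a (G.sig s)) * G.e a s * star (G.e a (G.sig s)))
              * G.e a (G.sig s) := by simp only [Q]; noncomm_ring
        _ = 0 := by rw [hts]; noncomm_ring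
    · have hz : G.e a s * star (G.e r (G.sig s)) * G.e r (G.sig s) = 0 :=
        G.vanish a r r s (G.sig s) (G.sig s)
          (by simp [Ne.symm (G.hsig s)]) (by simp [hra])
      calc G.P a s * star (G.e r (G.sig s)) * G.e r (G.sig s)
          = G.e a (G.sig s) * star (G.e a (G.sig s))
              * (G.e a s * star (G.e r (G.sig s)) * G.e r (G.sig s)) := by
            simp only [P]; noncomm_ring
        _ = 0 := by rw [hz, mul_zero]
  calc G.e a b * star (G.e k l) * G.Q r s
      = (G.e a b * star (G.e k l) * G.e r s) * star (G.e r (G.sig s)) * G.e r (G.sig s) := by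
        simp only [Q]; noncomm_ring
    _ = ((if b = l ∧ k = r then G.P a s else 0) + (if s = l ∧ k = a then G.Q r b else 0))
          * star (G.e r (G.sig s)) * G.e r (G.sig s) := by rw [hm]
    _ = (if b = l ∧ k = r then G.P a s * star (G.e r (G.sig s)) * G.e r (G.sig s) else 0)
        + (if s = l ∧ k = a then G.Q r b * star (G.e r (G.sig s)) * G.e r (G.sig s) else 0) := by
        split_ifs <;> noncomm_ring
    _ = if s = l ∧ k = a then G.Q r b else 0 := by
        rw [hC, G.QabsorbR r b (G.sig s)]; split_ifs <;> simp

/-- The set of elements which are a `P`, a `Q`, or zero. -/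
def IsPQ0 (w : B) : Prop := (∃ i s, w = G.P i s) ∨ (∃ i s, w = G.Q i s) ∨ w = 0

theorem step_mem (a : I) (b : J) (k : I) (l : J) {w : B} (hw : G.IsPQ0 w) :
    G.IsPQ0 (G.e a b * star (G.e k l) * w) := by
  rcases hw with ⟨r, s, rfl⟩ | ⟨r, s, rfl⟩ | rfl
  · rw [G.N1 a b k r l s]
    split_ifs
    · exact Or.inl ⟨a, s, rfl⟩
    · exact Or.inr (Or.inr rfl)
  · rw [G.N2 a b k r l s]
    split_ifs
    · exact Or.inr (Or.inl ⟨r, b, rfl⟩)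
    · exact Or.inr (Or.inr rfl)
  · rw [mul_zero]; exact Or.inr (Or.inr rfl)

theorem closure_mem (x y z : B)
    (hx : (∃ i s, x = G.P i s) ∨ (∃ i s, x = G.Q i s))
    (hy : (∃ i s, y = G.P i s) ∨ (∃ i s, y = G.Q i s))
    (hz : G.IsPQ0 z) :
    G.IsPQ0 (x * star y * z) := by
  rcases hy with ⟨c, d, rfl⟩ | ⟨c, d, rfl⟩
  · have w1 := G.step_mem c (G.sig d) c (G.sig d) hz
    rcases hx with ⟨i, j, rfl⟩ | ⟨i, j, rfl⟩
    · have w3 := G.step_mem i (G.sig j) i (G.sig j) (G.step_mem i j c d w1)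
      have hEq : G.P i j * star (G.P c d) * z
          = G.e i (G.sig j) * star (G.e i (G.sig j))
              * (G.e i j * star (G.e c d)
                * (G.e c (G.sig d) * star (G.e c (G.sig d)) * z)) := by
        simp only [P, StarMul.star_mul, star_star]; noncomm_ring
      rw [hEq]; exact w3
    · have w3 := G.step_mem i j i (G.sig j) (G.step_mem i (G.sig j) c d w1)
      have hEq : G.Q i j * star (G.P c d) * z
          = G.e i j * star (G.e i (G.sig j))
              * (G.e i (G.sig j) * star (G.e c d)
                * (G.e c (G.sig d) * star (G.e c (G.sig d)) * z)) := by
        simp only [P, Q, StarMul.star_mul, star_star]; noncomm_ring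
      rw [hEq]; exact w3
  · have w1 := G.step_mem c (G.sig d) c d hz
    rcases hx with ⟨i, j, rfl⟩ | ⟨i, j, rfl⟩
    · have w3 := G.step_mem i (G.sig j) i (G.sig j) (G.step_mem i j c (G.sig d) w1)
      have hEq : G.P i j * star (G.Q c d) * z
          = G.e i (G.sig j) * star (G.e i (G.sig j))
              * (G.e i j * star (G.e c (G.sig d))
                * (G.e c (G.sig d) * star (G.e c d) * z)) := by
        simp only [P, Q, StarMul.star_mul, star_star]; noncomm_ring
      rw [hEq]; exact w3
    · have w3 := G.step_mem i j i (G.sig j) (G.step_mem i (G.sig j) c (G.sig d) w1)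
      have hEq : G.Q i j * star (G.Q c d) * z
          = G.e i j * star (G.e i (G.sig j))
              * (G.e i (G.sig j) * star (G.e c (G.sig d))
                * (G.e c (G.sig d) * star (G.e c d) * z)) := by
        simp only [Q, StarMul.star_mul, star_star]; noncomm_ring
      rw [hEq]; exact w3

end Grid

section MatrixHelpers

variable {n m : ℕ}

theorem std_mul_std {l₁ l₂ l₃ : Type*} [Fintype l₂] [DecidableEq l₁] [DecidableEq l₂]
    [DecidableEq l₃] (i : l₁) (j j' : l₂) (k : l₃) (c d : ℂ) :
    Matrix.single i j c * Matrix.single j' k d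
      = if j = j' then Matrix.single i k (c * d) else 0 := by
  by_cases hj : j = j'
  · subst hj
    rw [if_pos rfl]
    ext a b
    rw [Matrix.mul_apply, Finset.sum_eq_single j]
    · by_cases ha : i = a <;> by_cases hb : k = b <;>
        simp [Matrix.single, Matrix.of_apply, ha, hb]
    · intro x _ hx
      rw [show Matrix.single i j c a x = if i = a ∧ j = x then c else 0 from rfl,
        if_neg (fun hc => hx hc.2.symm), zero_mul]
    · intro hx; exact absurd (Finset.mem_univ j) hx
  · rw [if_neg hj]
    ext a b
    rw [Matrix.mul_apply, Matrix.zero_apply]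
    apply Finset.sum_eq_zero
    intro x _
    by_cases h1 : i = a ∧ j = x
    · rw [show Matrix.single j' k d x b = if j' = x ∧ k = b then d else 0 from rfl,
        if_neg (fun hc => hj (h1.2.trans hc.1.symm)), mul_zero]
    · rw [show Matrix.single i j c a x = if i = a ∧ j = x then c else 0 from rfl,
        if_neg h1, zero_mul]

theorem std_conjTranspose {l₁ l₂ : Type*} [DecidableEq l₁] [DecidableEq l₂] (i : l₁) (j : l₂) :
    (Matrix.single i j (1 : ℂ))ᴴ = Matrix.single j i 1 := by
  ext a b
  by_cases h1 : j = a <;> by_cases h2 : i = b <;>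
    simp [Matrix.conjTranspose_apply, Matrix.single, Matrix.of_apply, h1, h2]

theorem std_transpose {l₁ l₂ : Type*} [DecidableEq l₁] [DecidableEq l₂] (i : l₁) (j : l₂) :
    (Matrix.single i j (1 : ℂ))ᵀ = Matrix.single j i 1 := by
  ext a b
  by_cases h1 : j = a <;> by_cases h2 : i = b <;>
    simp [Matrix.transpose_apply, Matrix.single, Matrix.of_apply, h1, h2]

theorem ct_t {k l : Type*} (M : Matrix k l ℂ) : (Mᴴ)ᵀ = (Mᵀ)ᴴ := by
  ext i j; simp [Matrix.conjTranspose_apply, Matrix.transpose_apply]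

theorem sum_smul_std {l₁ l₂ : Type*} [Fintype l₁] [Fintype l₂] [DecidableEq l₁] [DecidableEq l₂]
    (A : Matrix l₁ l₂ ℂ) :
    ∑ i, ∑ j, A i j • Matrix.single i j (1 : ℂ) = A := by
  conv_rhs => rw [matrix_eq_sum_single A]
  refine Finset.sum_congr rfl fun i _ => Finset.sum_congr rfl fun j _ => ?_
  rw [smul_single, smul_eq_mul, mul_one]

theorem jtpM_transpose {a b c : Matrix (Fin n) (Fin m) ℂ} :
    (jtpM a b c)ᵀ = jtpM aᵀ bᵀ cᵀ := by
  simp only [jtpM, Matrix.transpose_smul, Matrix.transpose_add, Matrix.transpose_mul, ct_t]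
  rw [add_comm]
  simp [Matrix.mul_assoc]

end MatrixHelpers

section UnivModel

variable (n m : ℕ)

/-- The model Hilbert space `ℂ^(n+m)`. -/
def KH : HilbertC := HilbertC.mk (EuclideanSpace ℂ (Fin n ⊕ Fin m))

/-- Pairs of rectangular matrices as off-diagonal block matrices. -/
def GmatL : (Matrix (Fin n) (Fin m) ℂ × Matrix (Fin m) (Fin n) ℂ) →ₗ[ℂ]
    Matrix (Fin n ⊕ Fin m) (Fin n ⊕ Fin m) ℂ where
  toFun p := Matrix.fromBlocks 0 p.1 p.2 0
  map_add' p q := by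
    simp only [Prod.fst_add, Prod.snd_add, Matrix.fromBlocks_add, add_zero]
  map_smul' c p := by
    simp only [Prod.smul_fst, Prod.smul_snd, Matrix.fromBlocks_smul, smul_zero,
      RingHom.id_apply]

/-- The representation of matrix pairs as operators on `ℂ^(n+m)`. -/
def PsiL : (Matrix (Fin n) (Fin m) ℂ × Matrix (Fin m) (Fin n) ℂ) →ₗ[ℂ] BH (KH n m) where
  toFun p := Matrix.toEuclideanCLM (𝕜 := ℂ) (GmatL n m p)
  map_add' p q := by
    show Matrix.toEuclideanCLM (𝕜 := ℂ) (GmatL n m (p + q)) = _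
    rw [_root_.map_add, _root_.map_add]
    rfl
  map_smul' c p := by
    show Matrix.toEuclideanCLM (𝕜 := ℂ) (GmatL n m (c • p)) = _
    rw [_root_.map_smul, _root_.map_smul]
    rfl

/-- Extraction of the two off-diagonal blocks. -/
def blkL : Matrix (Fin n ⊕ Fin m) (Fin n ⊕ Fin m) ℂ →ₗ[ℂ]
    (Matrix (Fin n) (Fin m) ℂ × Matrix (Fin m) (Fin n) ℂ) where
  toFun M := (M.toBlocks₁₂, M.toBlocks₂₁)
  map_add' M N := rfl
  map_smul' c M := rfl

theorem blk_Gmat (p : Matrix (Fin n) (Fin m) ℂ × Matrix (Fin m) (Fin n) ℂ) :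
    blkL n m (GmatL n m p) = p := by
  have h : GmatL n m p = Matrix.fromBlocks 0 p.1 p.2 0 := rfl
  show ((GmatL n m p).toBlocks₁₂, (GmatL n m p).toBlocks₂₁) = p
  rw [h]
  exact Prod.ext (Matrix.toBlocks_fromBlocks₁₂ _ _ _ _) (Matrix.toBlocks_fromBlocks₂₁ _ _ _ _)

theorem Gmat_mul3 (p q r : Matrix (Fin n) (Fin m) ℂ × Matrix (Fin m) (Fin n) ℂ) :
    GmatL n m p * star (GmatL n m q) * GmatL n m r
      = GmatL n m (p.1 * q.1ᴴ * r.1, p.2 * q.2ᴴ * r.2) := by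
  show Matrix.fromBlocks 0 p.1 p.2 0 * star (Matrix.fromBlocks 0 q.1 q.2 0)
      * Matrix.fromBlocks 0 r.1 r.2 0 = Matrix.fromBlocks 0 _ _ 0
  rw [Matrix.star_eq_conjTranspose, Matrix.fromBlocks_conjTranspose,
    Matrix.conjTranspose_zero, Matrix.conjTranspose_zero,
    Matrix.fromBlocks_multiply, Matrix.fromBlocks_multiply]
  simp [Matrix.mul_assoc]

theorem Psi_mul3 (p q r : Matrix (Fin n) (Fin m) ℂ × Matrix (Fin m) (Fin n) ℂ) :
    PsiL n m p * star (PsiL n m q) * PsiL n m r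
      = PsiL n m (p.1 * q.1ᴴ * r.1, p.2 * q.2ᴴ * r.2) := by
  show Matrix.toEuclideanCLM (𝕜 := ℂ) (GmatL n m p)
      * star (Matrix.toEuclideanCLM (𝕜 := ℂ) (GmatL n m q))
      * Matrix.toEuclideanCLM (𝕜 := ℂ) (GmatL n m r) = _
  rw [← map_star, ← _root_.map_mul, ← _root_.map_mul, Gmat_mul3]
  rfl

theorem Psi_inj : Function.Injective (PsiL n m) := by
  intro p q h
  have h' : Matrix.toEuclideanCLM (𝕜 := ℂ) (GmatL n m p)
      = Matrix.toEuclideanCLM (𝕜 := ℂ) (GmatL n m q) := h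
  have h3 := congrArg (Matrix.toEuclideanCLM (𝕜 := ℂ)).symm h'
  rw [StarAlgEquiv.symm_apply_apply, StarAlgEquiv.symm_apply_apply] at h3
  have h4 := congrArg (blkL n m) h3
  rwa [blk_Gmat, blk_Gmat] at h4

end UnivModel

section UnivModel2

variable (n m : ℕ)

/-- The model TRO `M_{n,m} ⊕ M_{m,n}` as a subspace of `B(ℂ^(n+m))`. -/
def Umod : Submodule ℂ (BH (KH n m)) := LinearMap.range (PsiL n m)

theorem Umod_fd : FiniteDimensional ℂ ↥(Umod n m) :=
  LinearMap.finiteDimensional_range (PsiL n m)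

theorem Umod_tro : IsTROsub (Umod n m) := by
  constructor
  · haveI := Umod_fd n m
    exact Submodule.closed_of_finiteDimensional _
  · rintro x hx y hy z hz
    obtain ⟨p, rfl⟩ := LinearMap.mem_range.mp hx
    obtain ⟨q, rfl⟩ := LinearMap.mem_range.mp hy
    obtain ⟨r, rfl⟩ := LinearMap.mem_range.mp hz
    rw [Psi_mul3]
    exact ⟨_, rfl⟩

/-- The pairing `a ↦ (a, aᵀ)`. -/
def pairT : Matrix (Fin n) (Fin m) ℂ →ₗ[ℂ]
    (Matrix (Fin n) (Fin m) ℂ × Matrix (Fin m) (Fin n) ℂ) where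
  toFun a := (a, aᵀ)
  map_add' a b := by simp [Prod.ext_iff, Matrix.transpose_add]
  map_smul' c a := by simp [Prod.ext_iff, Matrix.transpose_smul]

/-- The canonical triple homomorphism `M_{n,m} → M_{n,m} ⊕ M_{m,n}`. -/
def alphaC : Matrix (Fin n) (Fin m) ℂ →L[ℂ] ↥(Umod n m) :=
  LinearMap.toContinuousLinearMap
    (LinearMap.codRestrict (Umod n m) ((PsiL n m).comp (pairT n m)) (fun a => ⟨_, rfl⟩))

theorem alphaC_val (a : Matrix (Fin n) (Fin m) ℂ) :
    ((alphaC n m a : ↥(Umod n m)) : BH (KH n m)) = PsiL n m (a, aᵀ) := rfl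

theorem alpha_hom : IsTripleHomMat (Umod n m) (alphaC n m) := by
  intro a b c
  rw [alphaC_val, alphaC_val, alphaC_val, alphaC_val, jtp, Psi_mul3, Psi_mul3,
    ← _root_.map_add, ← _root_.map_smul]
  congr 1
  refine Prod.ext ?_ ?_
  · show jtpM a b c = (2⁻¹ : ℂ) • ((a, aᵀ).1 * ((b, bᵀ).1)ᴴ * (c, cᵀ).1
      + (c, cᵀ).1 * ((b, bᵀ).1)ᴴ * (a, aᵀ).1)
    rfl
  · show (jtpM a b c)ᵀ = (2⁻¹ : ℂ) • ((a, aᵀ).2 * ((b, bᵀ).2)ᴴ * (c, cᵀ).2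
      + (c, cᵀ).2 * ((b, bᵀ).2)ᴴ * (a, aᵀ).2)
    rw [jtpM_transpose]
    rfl

end UnivModel2

set_option maxHeartbeats 1000000

/-- for `n, m ≥ 2`, the universal enveloping TRO of `M_{n,m}(ℂ)` is
TRO-isomorphic to `M_{n,m}(ℂ) ⊕ M_{m,n}(ℂ)`. -/
theorem stmt_16 (n m : ℕ) (hn : 2 ≤ n) (hm : 2 ≤ m) (Hh : HilbertC)
    (T : Submodule ℂ (BH Hh)) (ρ : Matrix (Fin n) (Fin m) ℂ →L[ℂ] ↥T)
    (hUniv : IsUnivTROMat T ρ) :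
    ∃ Φ : ↥T →ₗ[ℂ] Matrix (Fin n) (Fin m) ℂ × Matrix (Fin m) (Fin n) ℂ,
      Function.Bijective Φ ∧
      ∀ x y z w : ↥T, (w : BH Hh) = (x : BH Hh) * star (y : BH Hh) * (z : BH Hh) →
        (Φ w).1 = (Φ x).1 * ((Φ y).1)ᴴ * (Φ z).1 ∧
        (Φ w).2 = (Φ x).2 * ((Φ y).2)ᴴ * (Φ z).2 := by
  classical
  obtain ⟨hTsub, hρtrip, hgen, huniv⟩ := hUniv
  let tL : Matrix (Fin n) (Fin m) ℂ →ₗ[ℂ] BH Hh := T.subtype.comp ρ.toLinearMap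
  have trel : ∀ a b c : Matrix (Fin n) (Fin m) ℂ,
      tL a * star (tL b) * tL c + tL c * star (tL b) * tL a
        = tL (a * bᴴ * c + c * bᴴ * a) := by
    intro a b c
    have h : tL (jtpM a b c) = jtp (tL a) (tL b) (tL c) := hρtrip a b c
    have h2 : (2⁻¹ : ℂ) • tL (a * bᴴ * c + c * bᴴ * a)
        = (2⁻¹ : ℂ) • (tL a * star (tL b) * tL c + tL c * star (tL b) * tL a) := by
      rw [← _root_.map_smul]
      exact h
    have h3 := smul_right_injective (BH Hh) (by norm_num : (2⁻¹ : ℂ) ≠ 0) h2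
    exact h3.symm
  have h0m : 0 < m := by omega
  have h1m : 1 < m := by omega
  have h0n : 0 < n := by omega
  have h1n : 1 < n := by omega
  let sg : Fin m → Fin m := fun s => if s = ⟨0, h0m⟩ then ⟨1, h1m⟩ else ⟨0, h0m⟩
  let tu : Fin n → Fin n := fun i => if i = ⟨0, h0n⟩ then ⟨1, h1n⟩ else ⟨0, h0n⟩
  have hsg : ∀ j, sg j ≠ j := by
    intro j
    by_cases h : j = ⟨0, h0m⟩
    · simp only [sg, if_pos h]
      rw [h]
      simp [Fin.ext_iff]
    · simp only [sg, if_neg h]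
      exact fun hh => h hh.symm
  have htu : ∀ i, tu i ≠ i := by
    intro i
    by_cases h : i = ⟨0, h0n⟩
    · simp only [tu, if_pos h]
      rw [h]
      simp [Fin.ext_iff]
    · simp only [tu, if_neg h]
      exact fun hh => h hh.symm
  have hstdmul : ∀ (i : Fin n) (j : Fin m) (k : Fin n) (l : Fin m) (r : Fin n) (s : Fin m),
      Matrix.single i j (1:ℂ) * (Matrix.single k l (1:ℂ))ᴴ * Matrix.single r s (1:ℂ)
        = if j = l ∧ k = r then Matrix.single i s (1:ℂ) else 0 := by
    intro i j k l r s
    rw [std_conjTranspose, std_mul_std i j l k 1 1]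
    by_cases hjl : j = l
    · rw [if_pos hjl, one_mul, std_mul_std i k r s 1 1]
      by_cases hkr : k = r
      · rw [if_pos hkr, one_mul, if_pos ⟨hjl, hkr⟩]
      · rw [if_neg hkr, if_neg (fun hc => hkr hc.2)]
    · rw [if_neg hjl, if_neg (fun hc => hjl hc.1)]
      exact Matrix.zero_mul _
  have hRel : ∀ (i : Fin n) (j : Fin m) (k : Fin n) (l : Fin m) (r : Fin n) (s : Fin m),
      tL (Matrix.single i j 1) * star (tL (Matrix.single k l 1)) * tL (Matrix.single r s 1)
        + tL (Matrix.single r s 1) * star (tL (Matrix.single k l 1)) * tL (Matrix.single i j 1)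
      = (if j = l ∧ k = r then tL (Matrix.single i s 1) else 0)
        + (if s = l ∧ k = i then tL (Matrix.single r j 1) else 0) := by
    intro i j k l r s
    have h := trel (Matrix.single i j 1) (Matrix.single k l 1) (Matrix.single r s 1)
    rw [_root_.map_add, hstdmul i j k l r s, hstdmul r s k l i j,
      apply_ite tL, apply_ite tL, _root_.map_zero] at h
    exact h
  have hHalf : ∀ x y : BH Hh, x + x = y + y → x = y := by
    intro x y hxy
    have h2 : (2 : ℂ) • x = (2 : ℂ) • y := by
      rw [two_smul, two_smul]; exact hxy
    exact smul_right_injective (BH Hh) (by norm_num : (2 : ℂ) ≠ 0) h2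
  let G : Grid (BH Hh) (Fin n) (Fin m) :=
    ⟨fun i j => tL (Matrix.single i j 1), hRel, hHalf, sg, hsg, tu, htu⟩
  let genf : (Fin n × Fin m) ⊕ (Fin n × Fin m) → BH Hh :=
    Sum.elim (fun p => G.P p.1 p.2) (fun p => G.Q p.1 p.2)
  let V : Submodule ℂ (BH Hh) := Submodule.span ℂ (Set.range genf)
  haveI hVfd : FiniteDimensional ℂ ↥V :=
    FiniteDimensional.span_of_finite ℂ (Set.finite_range genf)
  have hPQ0V : ∀ w : BH Hh, G.IsPQ0 w → w ∈ V := by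
    rintro w (⟨i, s, rfl⟩ | ⟨i, s, rfl⟩ | rfl)
    · exact Submodule.subset_span ⟨Sum.inl (i, s), rfl⟩
    · exact Submodule.subset_span ⟨Sum.inr (i, s), rfl⟩
    · exact zero_mem V
  have heV : ∀ i j, G.e i j ∈ V := by
    intro i j
    rw [← G.PQ i j]
    exact add_mem (hPQ0V _ (Or.inl ⟨i, j, rfl⟩)) (hPQ0V _ (Or.inr (Or.inl ⟨i, j, rfl⟩)))
  have hgen3 : ∀ x ∈ Set.range genf, ∀ y ∈ Set.range genf, ∀ z ∈ Set.range genf,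
      x * star y * z ∈ V := by
    rintro x ⟨px, rfl⟩ y ⟨py, rfl⟩ z ⟨pz, rfl⟩
    refine hPQ0V _ (G.closure_mem _ _ _ ?_ ?_ ?_)
    · rcases px with p | p
      · exact Or.inl ⟨p.1, p.2, rfl⟩
      · exact Or.inr ⟨p.1, p.2, rfl⟩
    · rcases py with p | p
      · exact Or.inl ⟨p.1, p.2, rfl⟩
      · exact Or.inr ⟨p.1, p.2, rfl⟩
    · rcases pz with p | p
      · exact Or.inl ⟨p.1, p.2, rfl⟩
      · exact Or.inr (Or.inl ⟨p.1, p.2, rfl⟩)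
  have hVtern : ∀ x ∈ V, ∀ y ∈ V, ∀ z ∈ V, x * star y * z ∈ V := by
    have step1 : ∀ u ∈ Set.range genf, ∀ v ∈ Set.range genf, ∀ w ∈ V,
        u * star v * w ∈ V := by
      intro u hu v hv w hw
      induction hw using Submodule.span_induction with
      | mem w hwmem => exact hgen3 u hu v hv w hwmem
      | zero => rw [mul_zero]; exact zero_mem V
      | add w1 w2 hw1 hw2 ih1 ih2 => rw [mul_add]; exact add_mem ih1 ih2
      | smul c w1 hw1 ih => rw [mul_smul_comm]; exact Submodule.smul_mem _ _ ih
    have step2 : ∀ u ∈ Set.range genf, ∀ v ∈ V, ∀ w ∈ V, u * star v * w ∈ V := by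
      intro u hu v hv
      induction hv using Submodule.span_induction with
      | mem v hvmem => exact step1 u hu v hvmem
      | zero =>
          intro w hw
          rw [star_zero, mul_zero, zero_mul]; exact zero_mem V
      | add v1 v2 hv1 hv2 ih1 ih2 =>
          intro w hw
          rw [star_add, mul_add, add_mul]
          exact add_mem (ih1 w hw) (ih2 w hw)
      | smul c v1 hv1 ih =>
          intro w hw
          rw [star_smul, mul_smul_comm, smul_mul_assoc]
          exact Submodule.smul_mem _ _ (ih w hw)
    intro x hx
    induction hx using Submodule.span_induction with
    | mem x hxmem => exact step2 x hxmem
    | zero =>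
        intro y hy z hz
        rw [zero_mul, zero_mul]; exact zero_mem V
    | add x1 x2 h1 h2 ih1 ih2 =>
        intro y hy z hz
        rw [add_mul, add_mul]
        exact add_mem (ih1 y hy z hz) (ih2 y hy z hz)
    | smul c x1 h1 ih =>
        intro y hy z hz
        rw [smul_mul_assoc, smul_mul_assoc]
        exact Submodule.smul_mem _ _ (ih y hy z hz)
  have hTV : T ≤ V := by
    rw [← hgen]
    refine sInf_le ⟨Submodule.closed_of_finiteDimensional V, ?_, hVtern⟩
    rintro x ⟨a, rfl⟩
    show tL a ∈ V
    have hsum : tL a = ∑ i, ∑ j, a i j • tL (Matrix.single i j 1) := by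
      conv_lhs => rw [show a = ∑ i, ∑ j, a i j • Matrix.single i j (1:ℂ)
        from (sum_smul_std a).symm]
      rw [map_sum]
      refine Finset.sum_congr rfl fun i _ => ?_
      rw [map_sum]
      exact Finset.sum_congr rfl fun j _ => by rw [_root_.map_smul]
    rw [hsum]
    exact Submodule.sum_mem _ fun i _ => Submodule.sum_mem _ fun j _ =>
      Submodule.smul_mem _ _ (heV i j)
  haveI hTfd : FiniteDimensional ℂ ↥T := Submodule.finiteDimensional_of_le hTV
  obtain ⟨β, hβ, hβρ⟩ := huniv (KH n m) (Umod n m) (Umod_tro n m) (alphaC n m) (alpha_hom n m)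
  let symmL : BH (KH n m) →ₗ[ℂ] Matrix (Fin n ⊕ Fin m) (Fin n ⊕ Fin m) ℂ :=
    { toFun := fun x => (Matrix.toEuclideanCLM (𝕜 := ℂ)).symm x,
      map_add' := fun x y => by
        exact _root_.map_add (Matrix.toEuclideanCLM (𝕜 := ℂ)).symm x y,
      map_smul' := fun c x => by
        exact _root_.map_smul (Matrix.toEuclideanCLM (𝕜 := ℂ)).symm c x }
  let Φ : ↥T →ₗ[ℂ] Matrix (Fin n) (Fin m) ℂ × Matrix (Fin m) (Fin n) ℂ :=
    (blkL n m).comp (symmL.comp ((Umod n m).subtype.comp β.toLinearMap))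
  have hβmem : ∀ v : ↥T, ∃ p, PsiL n m p = ((β v : ↥(Umod n m)) : BH (KH n m)) :=
    fun v => LinearMap.mem_range.mp ((β v).2 : _ ∈ LinearMap.range (PsiL n m))
  have hΦval : ∀ (v : ↥T) (p), PsiL n m p = ((β v : ↥(Umod n m)) : BH (KH n m)) → Φ v = p := by
    intro v p hp
    show blkL n m (symmL ((β v : ↥(Umod n m)) : BH (KH n m))) = p
    rw [← hp]
    show blkL n m ((Matrix.toEuclideanCLM (𝕜 := ℂ)).symm
      (Matrix.toEuclideanCLM (𝕜 := ℂ) (GmatL n m p))) = p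
    rw [StarAlgEquiv.symm_apply_apply]
    exact blk_Gmat n m p
  have hΦhom : ∀ x y z w : ↥T, (w : BH Hh) = (x : BH Hh) * star (y : BH Hh) * (z : BH Hh) →
      Φ w = ((Φ x).1 * ((Φ y).1)ᴴ * (Φ z).1, (Φ x).2 * ((Φ y).2)ᴴ * (Φ z).2) := by
    intro x y z w hw
    obtain ⟨px, hpx⟩ := hβmem x
    obtain ⟨py, hpy⟩ := hβmem y
    obtain ⟨pz, hpz⟩ := hβmem z
    have hx' : Φ x = px := hΦval x px hpx
    have hy' : Φ y = py := hΦval y py hpy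
    have hz' : Φ z = pz := hΦval z pz hpz
    have hb := hβ x y z w hw
    have hw' : PsiL n m (px.1 * py.1ᴴ * pz.1, px.2 * py.2ᴴ * pz.2)
        = ((β w : ↥(Umod n m)) : BH (KH n m)) := by
      rw [← Psi_mul3, hpx, hpy, hpz, ← hb]
    have hwv := hΦval w _ hw'
    rw [hwv, hx', hy', hz']
  -- surjectivity
  have hmemP : ∀ (i : Fin n) (j : Fin m), G.P i j ∈ T := fun i j =>
    hTsub.2 _ (ρ (Matrix.single i (sg j) 1)).2 _ (ρ (Matrix.single i (sg j) 1)).2 _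
      (ρ (Matrix.single i j 1)).2
  have hmemQ : ∀ (i : Fin n) (j : Fin m), G.Q i j ∈ T := fun i j =>
    hTsub.2 _ (ρ (Matrix.single i j 1)).2 _ (ρ (Matrix.single i (sg j) 1)).2 _
      (ρ (Matrix.single i (sg j) 1)).2
  let wP : Fin n → Fin m → ↥T := fun i j => ⟨G.P i j, hmemP i j⟩
  let wQ : Fin n → Fin m → ↥T := fun i j => ⟨G.Q i j, hmemQ i j⟩
  have hαval : ∀ a, ((alphaC n m a : ↥(Umod n m)) : BH (KH n m)) = PsiL n m (a, aᵀ) :=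
    alphaC_val n m
  have hΦwP : ∀ i j, Φ (wP i j) = (Matrix.single i j 1, 0) := by
    intro i j
    have hb := hβ (ρ (Matrix.single i (sg j) 1)) (ρ (Matrix.single i (sg j) 1))
        (ρ (Matrix.single i j 1)) (wP i j) rfl
    simp only [hβρ, hαval, Psi_mul3] at hb
    refine hΦval (wP i j) _ (Eq.trans ?_ hb.symm)
    congr 1
    refine Prod.ext ?_ ?_
    · show Matrix.single i j (1:ℂ)
        = Matrix.single i (sg j) 1 * (Matrix.single i (sg j) (1:ℂ))ᴴ * Matrix.single i j 1
      rw [std_conjTranspose, std_mul_std, if_pos rfl, one_mul, std_mul_std, if_pos rfl, one_mul]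
    · show (0 : Matrix (Fin m) (Fin n) ℂ)
        = (Matrix.single i (sg j) (1:ℂ))ᵀ * ((Matrix.single i (sg j) (1:ℂ))ᵀ)ᴴ
          * (Matrix.single i j (1:ℂ))ᵀ
      simp only [std_transpose, std_conjTranspose]
      rw [std_mul_std, if_pos rfl, one_mul, std_mul_std, if_neg (hsg j)]
  have hΦwQ : ∀ i j, Φ (wQ i j) = (0, Matrix.single j i 1) := by
    intro i j
    have hb := hβ (ρ (Matrix.single i j 1)) (ρ (Matrix.single i (sg j) 1))
        (ρ (Matrix.single i (sg j) 1)) (wQ i j) rfl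
    simp only [hβρ, hαval, Psi_mul3] at hb
    refine hΦval (wQ i j) _ (Eq.trans ?_ hb.symm)
    congr 1
    refine Prod.ext ?_ ?_
    · show (0 : Matrix (Fin n) (Fin m) ℂ)
        = Matrix.single i j 1 * (Matrix.single i (sg j) (1:ℂ))ᴴ * Matrix.single i (sg j) 1
      rw [std_conjTranspose, std_mul_std, if_neg (fun hh => hsg j hh.symm)]
      exact (Matrix.zero_mul _).symm
    · show Matrix.single j i (1:ℂ)
        = (Matrix.single i j (1:ℂ))ᵀ * ((Matrix.single i (sg j) (1:ℂ))ᵀ)ᴴ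
          * (Matrix.single i (sg j) (1:ℂ))ᵀ
      simp only [std_transpose, std_conjTranspose]
      rw [std_mul_std, if_pos rfl, one_mul, std_mul_std, if_pos rfl, one_mul]
  have hsurj : Function.Surjective Φ := by
    intro AB
    refine ⟨(∑ i, ∑ j, AB.1 i j • wP i j) + ∑ i, ∑ j, AB.2 j i • wQ i j, ?_⟩
    rw [map_add, map_sum, map_sum]
    simp only [map_sum, _root_.map_smul, hΦwP, hΦwQ]
    refine Prod.ext ?_ ?_
    · simp only [Prod.fst_add, Prod.fst_sum, Prod.smul_mk, smul_zero, Finset.sum_const_zero,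
        add_zero]
      exact sum_smul_std AB.1
    · simp only [Prod.snd_add, Prod.snd_sum, Prod.smul_mk, smul_zero, Finset.sum_const_zero,
        zero_add]
      rw [Finset.sum_comm]
      exact sum_smul_std AB.2
  have hrange : LinearMap.range Φ = ⊤ := LinearMap.range_eq_top.mpr hsurj
  have hinj : Function.Injective Φ := by
    rw [← LinearMap.ker_eq_bot]
    have h1 := LinearMap.finrank_range_add_finrank_ker Φ
    rw [hrange, finrank_top] at h1
    have h2 : Module.finrank ℂ (Matrix (Fin n) (Fin m) ℂ × Matrix (Fin m) (Fin n) ℂ)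
        = n * m + m * n := by
      rw [Module.finrank_prod, Module.finrank_matrix, Module.finrank_matrix]
      simp [Fintype.card_fin]
    have h3 : Module.finrank ℂ ↥T ≤ n * m + m * n := by
      have ha : Module.finrank ℂ ↥T ≤ Module.finrank ℂ ↥V := Submodule.finrank_mono hTV
      have hb2 : Module.finrank ℂ ↥V ≤ Fintype.card ((Fin n × Fin m) ⊕ (Fin n × Fin m)) :=
        finrank_range_le_card genf
      have hc : Fintype.card ((Fin n × Fin m) ⊕ (Fin n × Fin m)) = n * m + m * n := by
        simp [Fintype.card_sum, Fintype.card_prod, Fintype.card_fin, Nat.mul_comm]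
      exact ha.trans (hb2.trans (le_of_eq hc))
    rw [h2] at h1
    set D := n * m + m * n with hD
    have h4 : Module.finrank ℂ ↥(LinearMap.ker Φ) = 0 := by omega
    exact Submodule.finrank_eq_zero.mp h4
  refine ⟨Φ, ⟨hinj, hsurj⟩, ?_⟩
  intro x y z w hw
  have h := hΦhom x y z w hw
  rw [h]
  exact ⟨rfl, rfl⟩
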